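/- Let k > 0, let M, G ∈ ℂ and h > 0. Set A = 2·Re(M·G) + (2/k)·Re(M) and suppose A > 0. Then the 2×2 Hermitian matrix [[1/h − A, M], [conj(M), −h]] is negative definite if and only if h > (1 + |M|²)/A. Consequently the least upper bound on h guaranteeing negative definiteness frequency-wise is h_M = sup_ω (1 + |M(jω)|²)/(G(jω)*M(jω)* + M(jω)G(jω) + (M(jω) + M(jω)*)/k), the multiplier-based bound on the closed-loop L² gain from r₂ to y₂ of a Lurye system with slope-restricted nonlinearity. -/

import Mathlib

open Matrix Complex
open scoped ComplexOrder

/-- Negative-definiteness criterion for the multiplier LMI: for `M, G ∈ ℂ`, `k > 0`,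
`h > 0` and `A = 2 Re(MG) + (2/k) Re(M) > 0`, the Hermitian matrix
`[[1/h − A, M], [M*, −h]]` is negative definite if and only if `h > (1 + |M|²)/A`.
This yields the multiplier-based bound `h_M` on the `L²` gain from `r₂` to `y₂`. -/
theorem gain_lmi_negdef_iff (k : ℝ) (hk : 0 < k) (M G : ℂ) (h : ℝ) (hh : 0 < h)
    (A : ℝ) (hA : A = 2 * (M * G).re + (2 / k) * M.re) (hApos : 0 < A) :
    (-(!![((1 / h - A : ℝ) : ℂ), M;
          (starRingEnd ℂ) M, ((-h : ℝ) : ℂ)] : Matrix (Fin 2) (Fin 2) ℂ)).PosDef ↔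
      (1 + ‖M‖ ^ 2) / A < h := by
  have key : ∀ x : Fin 2 → ℂ,
      dotProduct (star x)
        ((-(!![((1 / h - A : ℝ) : ℂ), M;
          (starRingEnd ℂ) M, ((-h : ℝ) : ℂ)] : Matrix (Fin 2) (Fin 2) ℂ)) *ᵥ x) =
      (((A - 1/h) * Complex.normSq (x 0) - 2 * (M * (starRingEnd ℂ) (x 0) * x 1).re
        + h * Complex.normSq (x 1) : ℝ) : ℂ) := by
    intro x
    simp [dotProduct, Matrix.mulVec, Fin.sum_univ_two, Pi.star_apply, Complex.ext_iff,
      Complex.normSq_apply]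
    constructor <;> ring
  constructor
  · intro hpd
    obtain ⟨_, hq⟩ := Matrix.posDef_iff_dotProduct_mulVec.mp hpd
    have hx := hq (x := ![1, (starRingEnd ℂ) M / h]) (by
      intro hx0
      have := congrFun hx0 0
      simp at this)
    rw [key] at hx
    rw [Complex.zero_lt_real] at hx
    simp [Complex.normSq_div, Complex.normSq_conj, Complex.normSq_eq_norm_sq, mul_comm,
      mul_div_assoc, Complex.mul_conj] at hx
    -- hx : 0 < (A - 1/h) - 2 * |M|^2/h + ... ; massage
    rw [div_lt_iff₀ hApos]
    have hm := norm_nonneg M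
    have habs : ‖M‖ ^ 2 = M.re ^ 2 + M.im ^ 2 := by
      rw [Complex.sq_norm, Complex.normSq_apply]; ring
    have hne : h ≠ 0 := ne_of_gt hh
    field_simp at hx
    nlinarith [hx, habs, sq_nonneg M.re, sq_nonneg M.im, hh]
  · intro hlt
    have hAh : 1 + ‖M‖ ^ 2 < A * h := by
      rw [div_lt_iff₀ hApos] at hlt; linarith [hlt]
    rw [Matrix.posDef_iff_dotProduct_mulVec]
    constructor
    · ext i j
      fin_cases i <;> fin_cases j <;>
        simp [Matrix.conjTranspose_apply]
    · intro x hx0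
      rw [key, Complex.zero_lt_real]
      have hcases : x 0 ≠ 0 ∨ x 1 ≠ 0 := by
        by_contra hc
        push_neg at hc
        apply hx0
        funext i
        fin_cases i <;> simp [hc.1, hc.2]
      have hre : (M * (starRingEnd ℂ) (x 0) * x 1).re
          ≤ ‖M‖ * ‖x 0‖ * ‖x 1‖ := by
        calc (M * (starRingEnd ℂ) (x 0) * x 1).re
            ≤ ‖M * (starRingEnd ℂ) (x 0) * x 1‖ := Complex.re_le_norm _
          _ = ‖M‖ * ‖x 0‖ * ‖x 1‖ := by
              simp [_root_.map_mul, Complex.norm_conj]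
      rw [Complex.normSq_eq_norm_sq, Complex.normSq_eq_norm_sq]
      set t := ‖x 0‖
      set s := ‖x 1‖
      have ht : 0 ≤ t := norm_nonneg _
      have hs : 0 ≤ s := norm_nonneg _
      have hts : 0 < t ∨ 0 < s := by
        rcases hcases with h1 | h1
        · exact Or.inl (by simpa [t] using norm_pos_iff.mpr h1)
        · exact Or.inr (by simpa [s] using norm_pos_iff.mpr h1)
      have hm : 0 ≤ ‖M‖ := norm_nonneg M
      set m := ‖M‖
      set a := A - 1 / h with haa
      have hne : h ≠ 0 := ne_of_gt hh
      have hprod : a * h = A * h - 1 := by rw [haa, sub_mul, one_div, inv_mul_cancel₀ hne]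
      have ham : m ^ 2 < a * h := by rw [hprod]; nlinarith
      have hapos : 0 < a := by nlinarith [lt_of_le_of_lt (sq_nonneg m) ham]
      have hgoal : 0 < a * t ^ 2 - 2 * (m * t * s) + h * s ^ 2 := by
        rcases hts with h1 | h1
        · nlinarith [sq_nonneg (h * s - m * t), mul_pos (sub_pos.mpr ham) (pow_pos h1 2)]
        · nlinarith [sq_nonneg (a * t - m * s), mul_pos (sub_pos.mpr ham) (pow_pos h1 2)]
      linarith [hre, hgoal]
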